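/- Let X' be the minimum of M independent uniform random variables on [0, a] (with 0 < a ≤ 1) and let 0 < c ≤ a. Then E[min(X', c)] = (a + (c − a)(1 − c/a)^M)/(M + 1) ≥ a(1 − (1 − c)^M)/(M + 1). -/

import Mathlib

open MeasureTheory ProbabilityTheory

/-- Let `X'` be the minimum of `M ≥ 1` independent uniform random
variables on `[0, a]` (with `0 < a ≤ 1`) and let `0 < c ≤ a`. Then
`E[min(X', c)] = (a + (c - a)(1 - c/a)^M)/(M + 1) ≥ a(1 - (1 - c)^M)/(M + 1)`. -/
theorem expectation_truncated_min_uniform {Ω : Type*} [MeasurableSpace Ω]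
    (μ : Measure Ω) [IsProbabilityMeasure μ]
    (M : ℕ) (hM : 1 ≤ M) (a c : ℝ) (ha0 : 0 < a) (ha1 : a ≤ 1) (hc0 : 0 < c) (hca : c ≤ a)
    (X : Fin M → Ω → ℝ) (hmeas : ∀ i, Measurable (X i))
    (hindep : iIndepFun X μ)
    (hunif : ∀ i, Measure.map (X i) μ =
      (ENNReal.ofReal a)⁻¹ • volume.restrict (Set.Icc 0 a)) :
    ∫ ω, min (⨅ i, X i ω) c ∂μ = (a + (c - a) * (1 - c / a) ^ M) / (M + 1) ∧
      a * (1 - (1 - c) ^ M) / (M + 1) ≤ ∫ ω, min (⨅ i, X i ω) c ∂μ := by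
  haveI : Nonempty (Fin M) := Fin.pos_iff_nonempty.mp hM
  set f : Ω → ℝ := fun ω => min (⨅ i, X i ω) c with hf
  -- measurability
  have hinfmeas : Measurable fun ω => ⨅ i, X i ω := Measurable.iInf hmeas
  have hfmeas : Measurable f := hinfmeas.min measurable_const
  -- per-coordinate tail probability
  have htail : ∀ (i : Fin M) (t : ℝ), 0 ≤ t → t ≤ a →
      μ (X i ⁻¹' Set.Ioi t) = ENNReal.ofReal ((a - t) / a) := by
    intro i t ht0 hta
    have : μ (X i ⁻¹' Set.Ioi t) = Measure.map (X i) μ (Set.Ioi t) := by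
      rw [Measure.map_apply (hmeas i) measurableSet_Ioi]
    rw [this, hunif i]
    simp only [Measure.smul_apply, smul_eq_mul, Measure.restrict_apply measurableSet_Ioi]
    have hset : Set.Ioi t ∩ Set.Icc 0 a = Set.Ioc t a := by
      ext x
      simp only [Set.mem_inter_iff, Set.mem_Ioi, Set.mem_Icc, Set.mem_Ioc]
      constructor
      · rintro ⟨h1, _, h3⟩; exact ⟨h1, h3⟩
      · rintro ⟨h1, h2⟩; exact ⟨h1, le_trans ht0 h1.le, h2⟩
    rw [hset, Real.volume_Ioc, ENNReal.ofReal_div_of_pos ha0, div_eq_mul_inv, mul_comm]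
  -- a.e. nonnegativity of each X i
  have hae : ∀ᵐ ω ∂μ, ∀ i, 0 ≤ X i ω := by
    rw [MeasureTheory.ae_all_iff]
    intro i
    have h0 : μ (X i ⁻¹' Set.Iio 0) = 0 := by
      rw [← Measure.map_apply (hmeas i) measurableSet_Iio, hunif i]
      simp only [Measure.smul_apply, smul_eq_mul, Measure.restrict_apply measurableSet_Iio]
      have : Set.Iio (0:ℝ) ∩ Set.Icc 0 a = ∅ := by
        ext x; simp only [Set.mem_inter_iff, Set.mem_Iio, Set.mem_Icc, Set.mem_empty_iff_false,
          iff_false, not_and]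
        intro h1 h2 _; linarith
      rw [this]; simp
    filter_upwards [measure_eq_zero_iff_ae_notMem.mp h0] with ω hω
    simpa using hω
  have hbdd : ∀ ω, BddBelow (Set.range fun i => X i ω) :=
    fun ω => (Set.finite_range _).bddBelow
  have hfnn : 0 ≤ᵐ[μ] f := by
    filter_upwards [hae] with ω hω
    exact le_min (le_ciInf fun i => hω i) hc0.le
  have hfint : Integrable f μ := by
    apply (integrable_const c).mono' hfmeas.aestronglyMeasurable
    filter_upwards [hfnn] with ω hω
    rw [Real.norm_eq_abs, abs_of_nonneg hω]
    exact min_le_right _ _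
  -- the tail probability of f
  have hkey : ∀ t : ℝ, 0 < t →
      (μ {ω | t < f ω}).toReal = if t < c then ((a - t) / a) ^ M else 0 := by
    intro t ht
    by_cases htc : t < c
    · have hseteq : {ω | t < f ω} = ⋂ i, X i ⁻¹' Set.Ioi t := by
        ext ω
        simp only [Set.mem_setOf_eq, lt_min_iff, Set.mem_iInter, Set.mem_preimage,
          Set.mem_Ioi, hf]
        constructor
        · intro h i
          exact lt_of_lt_of_le h.1 (ciInf_le (hbdd ω) i)
        · intro h
          obtain ⟨i, hi⟩ := exists_eq_ciInf_of_finite (f := fun i => X i ω)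
          exact ⟨hi ▸ h i, htc⟩
      rw [if_pos htc, hseteq,
        hindep.meas_iInter (fun i => ⟨Set.Ioi t, measurableSet_Ioi, rfl⟩)]
      have hta : t ≤ a := le_trans htc.le hca
      simp only [htail _ t ht.le hta]
      have hnn : (0:ℝ) ≤ (a - t) / a := by
        apply div_nonneg _ ha0.le; linarith
      rw [Finset.prod_const, Finset.card_univ, Fintype.card_fin,
        ← ENNReal.ofReal_pow hnn, ENNReal.toReal_ofReal (by positivity)]
    · have : {ω | t < f ω} = ∅ := by
        ext ω
        simp only [Set.mem_setOf_eq, lt_min_iff, Set.mem_empty_iff_false, iff_false, not_and, hf]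
        intro _; linarith
      rw [if_neg htc, this]; simp
  -- evaluate the integral via layer cake
  have hmain : ∫ ω, f ω ∂μ = (a + (c - a) * (1 - c / a) ^ M) / (M + 1) := by
    rw [hfint.integral_eq_integral_meas_lt hfnn]
    simp only [measureReal_def]
    have h1 : ∫ t in Set.Ioi (0:ℝ), (μ {ω | t < f ω}).toReal
        = ∫ t in Set.Ioi (0:ℝ), (Set.Ioo 0 c).indicator (fun t => ((a - t) / a) ^ M) t := by
      apply setIntegral_congr_fun measurableSet_Ioi
      intro t ht
      simp only [hkey t ht]
      by_cases htc : t < c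
      · rw [if_pos htc, Set.indicator_of_mem (Set.mem_Ioo.mpr ⟨ht, htc⟩)]
      · rw [if_neg htc, Set.indicator_of_notMem (fun h => htc (Set.mem_Ioo.mp h).2)]
    rw [h1, setIntegral_indicator measurableSet_Ioo,
      Set.inter_eq_self_of_subset_right Set.Ioo_subset_Ioi_self,
      ← integral_Ioc_eq_integral_Ioo, ← intervalIntegral.integral_of_le hc0.le]
    have h3 : ∀ t : ℝ, ((a - t) / a) ^ M = (a - t) ^ M * (a ^ M)⁻¹ := fun t => by
      rw [div_pow, div_eq_mul_inv]
    simp only [h3]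
    rw [intervalIntegral.integral_mul_const,
      intervalIntegral.integral_comp_sub_left (fun x => x ^ M) a, integral_pow]
    have haM : (a : ℝ) ^ M ≠ 0 := pow_ne_zero _ ha0.ne'
    have hca' : (1 - c / a) = (a - c) / a := by field_simp
    have hM1 : ((M : ℝ) + 1) ≠ 0 := by positivity
    rw [hca', div_pow]
    field_simp
    ring
  refine ⟨hmain, ?_⟩
  rw [hmain]
  have h1 : (0:ℝ) ≤ 1 - c / a := by
    have : c / a ≤ 1 := (div_le_one ha0).mpr hca
    linarith
  have h2 : 1 - c / a ≤ 1 - c := by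
    have : c ≤ c / a := by
      rw [le_div_iff₀ ha0]; nlinarith
    linarith
  have h3 : (1 - c / a) ^ M ≤ (1 - c) ^ M := pow_le_pow_left₀ h1 h2 M
  have h4 : a - c = a * (1 - c / a) := by field_simp
  have h5 : (a - c) * (1 - c / a) ^ M ≤ a * (1 - c) ^ M := by
    calc (a - c) * (1 - c / a) ^ M = a * ((1 - c / a) * (1 - c / a) ^ M) := by rw [h4]; ring
      _ ≤ a * ((1 - c) * (1 - c) ^ M) := by
          apply mul_le_mul_of_nonneg_left _ ha0.le
          exact mul_le_mul h2 h3 (pow_nonneg h1 M) (by linarith)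
      _ ≤ a * (1 - c) ^ M := by
          apply mul_le_mul_of_nonneg_left _ ha0.le
          nlinarith [pow_nonneg (show (0:ℝ) ≤ 1 - c by linarith) M]
  have hnum : a * (1 - (1 - c) ^ M) ≤ a + (c - a) * (1 - c / a) ^ M := by linarith
  gcongr
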